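/- Let G be a connected signed graph with n vertices and m edges. Then G has a balanced subgraph with at least m/2 + (n-1)/4 edges; that is, β(G) ≥ pt(G) = m/2 + (n-1)/4 (the Poljak–Turzík bound). -/

import Mathlib

/-- Sign convention: `true` = positive edge, `false` = negative edge.
An edge `e` is *consistent* with the partition `(A, Aᶜ)` of the vertex set if it is
positive when both endpoints lie on the same side and negative otherwise. -/
def SignConsistent {V : Type*} (sign : Sym2 V → Bool) (A : Set V) (e : Sym2 V) : Prop :=
  ∀ u v : V, e = s(u, v) → (sign e = true ↔ (u ∈ A ↔ v ∈ A))

/-- The number of edges of the balanced subgraph induced by the partition `(A, Aᶜ)`. -/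
noncomputable def balCount {V : Type*} (G : SimpleGraph V) (sign : Sym2 V → Bool)
    (A : Set V) : ℕ :=
  {e | e ∈ G.edgeSet ∧ SignConsistent sign A e}.ncard

/-- `beta G sign` = β(G): the maximum number of edges of a balanced subgraph of the
signed graph `(G, sign)`. -/
noncomputable def beta {V : Type*} (G : SimpleGraph V) (sign : Sym2 V → Bool) : ℕ :=
  sSup {n | ∃ A : Set V, n = balCount G sign A}

/-- The Poljak–Turzík bound `pt G = m/2 + (n − t)/4`, where `m` is the number of edges,
`n` the number of vertices and `t` the number of connected components. -/
noncomputable def pt {V : Type*} (G : SimpleGraph V) : ℚ :=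
  (G.edgeSet.ncard : ℚ) / 2 +
    ((Nat.card V : ℚ) - (Nat.card G.ConnectedComponent : ℚ)) / 4

/-- β of the signed subgraph induced on the vertex set `U`. -/
noncomputable def betaOn {V : Type*} (G : SimpleGraph V) (sign : Sym2 V → Bool)
    (U : Set V) : ℕ :=
  beta (G.induce U) (fun e => sign (Sym2.map Subtype.val e))

/-- `pt` of the subgraph induced on the vertex set `U`. -/
noncomputable def ptOn {V : Type*} (G : SimpleGraph V) (U : Set V) : ℚ :=
  pt (G.induce U)

/-- The signed graph `(G, sign)` is balanced: some partition `(A, Aᶜ)` is consistent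
with every edge. -/
def IsBalanced {V : Type*} (G : SimpleGraph V) (sign : Sym2 V → Bool) : Prop :=
  ∃ A : Set V, ∀ u v : V, G.Adj u v → (sign s(u, v) = true ↔ (u ∈ A ↔ v ∈ A))

/-- `a`, `b`, `c` form a positive triangle: all three edges exist and the number of
negative edges among them is even. -/
def PositiveTriangle {V : Type*} (G : SimpleGraph V) (sign : Sym2 V → Bool)
    (a b c : V) : Prop :=
  G.Adj a b ∧ G.Adj b c ∧ G.Adj c a ∧
    Even ((if sign s(a, b) then 0 else 1) + (if sign s(b, c) then 0 else 1) +
      (if sign s(c, a) then 0 else 1))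

/-- `X` is (the vertex set of) a connected component of `G − S`. -/
def IsCompOf {V : Type*} (G : SimpleGraph V) (S X : Set V) : Prop :=
  Disjoint X S ∧ (G.induce X).Connected ∧
    ∀ x ∈ X, ∀ y : V, G.Adj x y → y ∉ S → y ∈ X

/-- The neighborhood of a vertex set `X`. -/
def nbhd {V : Type*} (G : SimpleGraph V) (X : Set V) : Set V :=
  {v | v ∉ X ∧ ∃ x ∈ X, G.Adj x v}

namespace PTaux

open SimpleGraph Set

variable {W : Type*}

example [Finite W] : Finite (Sym2 W) := inferInstance

lemma sc_pair (sign : Sym2 W → Bool) (B : Set W) {x y : W} (hxy : x ≠ y) :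
    SignConsistent sign B s(x, y) ↔ (sign s(x, y) = true ↔ (x ∈ B ↔ y ∈ B)) := by
  constructor
  · intro h; exact h x y rfl
  · intro h u v huv
    rw [Sym2.eq_iff] at huv
    rcases huv with ⟨rfl, rfl⟩ | ⟨rfl, rfl⟩
    · exact h
    · rw [h]; tauto

lemma sc_congr (sign : Sym2 W → Bool) {A A' : Set W} {e : Sym2 W}
    (h : ∀ x ∈ e, (x ∈ A ↔ x ∈ A')) :
    SignConsistent sign A e ↔ SignConsistent sign A' e := by
  constructor <;> intro hs u v he <;>
    [skip; skip] <;>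
  · have hu : u ∈ e := by simp [he]
    have hv : v ∈ e := by simp [he]
    rw [hs u v he]
    constructor <;> intro hh <;> [skip;skip] <;> first
      | (rw [← h u hu, ← h v hv]; exact hh)
      | (rw [h u hu, h v hv]; exact hh)

lemma ncard_split {α : Type*} (E : Set α) (hE : E.Finite) (P : α → Prop) :
    E.ncard = {e | e ∈ E ∧ P e}.ncard + {e | e ∈ E ∧ ¬ P e}.ncard := by
  classical
  have hu : E = {e | e ∈ E ∧ P e} ∪ {e | e ∈ E ∧ ¬ P e} := by
    ext e; by_cases h : P e <;> simp [h]
  have hd : Disjoint {e | e ∈ E ∧ P e} {e | e ∈ E ∧ ¬ P e} := by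
    rw [Set.disjoint_left]; rintro e ⟨-, h1⟩ ⟨-, h2⟩; exact h2 h1
  have h2 := Set.ncard_union_eq hd (hE.subset (fun e (h : e ∈ E ∧ P e) => h.1))
    (hE.subset (fun e (h : e ∈ E ∧ ¬ P e) => h.1))
  rw [← hu] at h2
  exact h2

lemma greedy (sign : Sym2 W → Bool) (A : Set W) (x : W) (F : Set (Sym2 W)) (hF : F.Finite)
    (hmem : ∀ e ∈ F, x ∈ e ∧ ¬ e.IsDiag) :
    ∃ A₂ : Set W, (∀ z, z ≠ x → (z ∈ A₂ ↔ z ∈ A)) ∧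
      F.ncard ≤ 2 * {e | e ∈ F ∧ SignConsistent sign A₂ e}.ncard ∧
      (Odd F.ncard → F.ncard + 1 ≤ 2 * {e | e ∈ F ∧ SignConsistent sign A₂ e}.ncard) := by
  classical
  have hdecomp : ∀ e ∈ F, (SignConsistent sign (A ∪ {x}) e ↔ ¬ SignConsistent sign (A \ {x}) e) := by
    intro e he
    obtain ⟨hxe, hdiag⟩ := hmem e he
    obtain ⟨y, rfl⟩ := Sym2.mem_iff_exists.mp hxe
    have hxy : x ≠ y := by simpa [Sym2.mk_isDiag_iff] using hdiag
    rw [sc_pair sign _ hxy, sc_pair sign _ hxy]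
    have h1 : x ∈ A ∪ {x} := by simp
    have h2 : y ∈ A ∪ {x} ↔ y ∈ A := by simp [Ne.symm hxy]
    have h3 : x ∉ A \ {x} := by simp
    have h4 : y ∈ A \ {x} ↔ y ∈ A := by simp [Ne.symm hxy]
    by_cases hs : sign s(x,y) = true <;> by_cases hy : y ∈ A <;> simp_all
  set F₁ := {e | e ∈ F ∧ SignConsistent sign (A ∪ {x}) e} with hF₁
  set F₂ := {e | e ∈ F ∧ SignConsistent sign (A \ {x}) e} with hF₂
  have hcard : F.ncard = F₁.ncard + F₂.ncard := by
    have := ncard_split F hF (SignConsistent sign (A ∪ {x}))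
    rw [this, ← hF₁]
    congr 1
    apply congrArg
    ext e
    simp only [hF₂, Set.mem_setOf_eq]
    constructor
    · rintro ⟨he, h⟩; exact ⟨he, not_not.mp (fun hc => h ((hdecomp e he).mpr hc))⟩
    · rintro ⟨he, h⟩; exact ⟨he, fun hc => ((hdecomp e he).mp hc) h⟩
  have hf1 : F₁.Finite := hF.subset fun e h => h.1
  have hf2 : F₂.Finite := hF.subset fun e h => h.1
  rcases le_total F₁.ncard F₂.ncard with hle | hle
  · refine ⟨A \ {x}, fun z hz => by simp [hz], ?_, ?_⟩
    · rw [← hF₂]; omega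
    · rw [← hF₂]; intro hodd; rw [Nat.odd_iff] at hodd; omega
  · refine ⟨A ∪ {x}, fun z hz => by simp [hz], ?_, ?_⟩
    · rw [← hF₁]; omega
    · rw [← hF₁]; intro hodd; rw [Nat.odd_iff] at hodd; omega



section Part2

variable {W : Type*}

open SimpleGraph Set

lemma mem_pair_eq {a b : W} {e : Sym2 W} (hab : a ≠ b) (ha : a ∈ e) (hb : b ∈ e) :
    e = s(a, b) := by
  induction e with
  | _ x y =>
    rw [Sym2.mem_iff] at ha hb
    rcases ha with rfl | rfl <;> rcases hb with rfl | rfl <;> first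
      | exact absurd rfl hab
      | rfl
      | exact Sym2.eq_swap

lemma mapval_mem_edgeSet (G : SimpleGraph W) (U : Set W) (e' : Sym2 U) :
    e' ∈ (G.induce U).edgeSet ↔ Sym2.map Subtype.val e' ∈ G.edgeSet := by
  induction e' with
  | _ a b => simp [Sym2.map_pair_eq]

lemma sc_mapval (G : SimpleGraph W) (sign : Sym2 W → Bool) (U : Set W) (A' : Set U)
    (e' : Sym2 U) (hd : ¬ (Sym2.map Subtype.val e').IsDiag) :
    SignConsistent (fun e => sign (Sym2.map Subtype.val e)) A' e' ↔
      SignConsistent sign (Subtype.val '' A') (Sym2.map Subtype.val e') := by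
  induction e' with
  | _ a b =>
    rw [Sym2.map_pair_eq] at hd ⊢
    have hab : a ≠ b := by
      intro h; rw [h] at hd; exact hd (Sym2.mk_isDiag_iff.mpr rfl)
    have hab' : (a : W) ≠ (b : W) := fun h => hab (Subtype.ext h)
    rw [sc_pair _ _ hab, sc_pair _ _ hab', Sym2.map_pair_eq,
      Subtype.val_injective.mem_set_image, Subtype.val_injective.mem_set_image]

lemma balCount_induce (G : SimpleGraph W) (sign : Sym2 W → Bool) (U : Set W) (A' : Set U) :
    balCount (G.induce U) (fun e => sign (Sym2.map Subtype.val e)) A'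
      = {e | (e ∈ G.edgeSet ∧ ∀ x ∈ e, x ∈ U) ∧ SignConsistent sign (Subtype.val '' A') e}.ncard := by
  unfold balCount
  rw [← Set.ncard_image_of_injective _ (Sym2.map.injective Subtype.val_injective)]
  congr 1
  ext e
  simp only [Set.mem_image, Set.mem_setOf_eq]
  constructor
  · rintro ⟨e', ⟨he', hsc⟩, rfl⟩
    have hE := (mapval_mem_edgeSet G U e').mp he'
    refine ⟨⟨hE, ?_⟩, ?_⟩
    · intro x hx
      rw [Sym2.mem_map] at hx
      obtain ⟨a, -, rfl⟩ := hx
      exact a.2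
    · exact (sc_mapval G sign U A' e' (G.not_isDiag_of_mem_edgeSet hE)).mp hsc
  · rintro ⟨⟨he, hU⟩, hsc⟩
    induction e with
    | _ x y =>
      have hx : x ∈ U := hU x (by simp)
      have hy : y ∈ U := hU y (by simp)
      refine ⟨s(⟨x, hx⟩, ⟨y, hy⟩), ⟨?_, ?_⟩, by rw [Sym2.map_pair_eq]⟩
      · rw [mapval_mem_edgeSet, Sym2.map_pair_eq]; exact he
      · apply (sc_mapval G sign U A' _ ?_).mpr
        · rw [Sym2.map_pair_eq]; exact hsc
        · rw [Sym2.map_pair_eq]; exact G.not_isDiag_of_mem_edgeSet he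

lemma edgeSet_induce_ncard (G : SimpleGraph W) (U : Set W) :
    (G.induce U).edgeSet.ncard = {e | e ∈ G.edgeSet ∧ ∀ x ∈ e, x ∈ U}.ncard := by
  rw [← Set.ncard_image_of_injective _ (Sym2.map.injective Subtype.val_injective)]
  congr 1
  ext e
  simp only [Set.mem_image, Set.mem_setOf_eq]
  constructor
  · rintro ⟨e', he', rfl⟩
    refine ⟨(mapval_mem_edgeSet G U e').mp he', ?_⟩
    intro x hx
    rw [Sym2.mem_map] at hx
    obtain ⟨a, -, rfl⟩ := hx
    exact a.2
  · rintro ⟨he, hU⟩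
    induction e with
    | _ x y =>
      have hx : x ∈ U := hU x (by simp)
      have hy : y ∈ U := hU y (by simp)
      refine ⟨s(⟨x, hx⟩, ⟨y, hy⟩), ?_, by rw [Sym2.map_pair_eq]⟩
      rw [mapval_mem_edgeSet, Sym2.map_pair_eq]; exact he

lemma ncard_edges_at (G : SimpleGraph W) (v : W) :
    {e | e ∈ G.edgeSet ∧ v ∈ e}.ncard = {y | G.Adj v y}.ncard := by
  have himg : {e | e ∈ G.edgeSet ∧ v ∈ e} = (fun y => s(v, y)) '' {y | G.Adj v y} := by
    ext e
    simp only [Set.mem_image, Set.mem_setOf_eq]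
    constructor
    · rintro ⟨he, hv⟩
      obtain ⟨y, rfl⟩ := Sym2.mem_iff_exists.mp hv
      exact ⟨y, he, rfl⟩
    · rintro ⟨y, hy, rfl⟩
      exact ⟨hy, by simp⟩
  rw [himg, Set.ncard_image_of_injOn]
  intro y hy y' hy' h
  rw [Sym2.eq_iff] at h
  rcases h with ⟨-, h⟩ | ⟨h1, -⟩
  · exact h
  · exact absurd h1 (G.ne_of_adj (show G.Adj v y' from hy'))

end Part2

section Part3

variable {W : Type*}

open SimpleGraph Set

def ConnOn (G : SimpleGraph W) (U : Set W) : Prop := (G.induce U).Connected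

lemma reachIn_of_connOn {G : SimpleGraph W} {U : Set W} (h : ConnOn G U) {x y : W}
    (hx : x ∈ U) (hy : y ∈ U) : ∃ p : G.Walk x y, ∀ z ∈ p.support, z ∈ U := by
  obtain ⟨p'⟩ := h.preconnected ⟨x, hx⟩ ⟨y, hy⟩
  let f : G.induce U →g G := ⟨Subtype.val, fun {a b} h => h⟩
  refine ⟨p'.map f, ?_⟩
  intro z hz
  rw [Walk.support_map, List.mem_map] at hz
  obtain ⟨a, -, rfl⟩ := hz
  exact a.2

lemma connOn_of_root {G : SimpleGraph W} {U : Set W} (r : W) (hr : r ∈ U)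
    (h : ∀ x ∈ U, ∃ p : G.Walk x r, ∀ z ∈ p.support, z ∈ U) : ConnOn G U := by
  apply G.induce_connected_of_patches r hr
  intro v hv
  obtain ⟨p, hp⟩ := h v hv
  refine ⟨{z | z ∈ p.support}, fun z hz => hp z hz, p.end_mem_support, p.start_mem_support, ?_⟩
  exact (p.connected_induce_support).preconnected _ _

lemma connOn_insert {G : SimpleGraph W} {U : Set W} (h : ConnOn G U) {x u₀ : W}
    (hu : u₀ ∈ U) (ha : G.Adj x u₀) : ConnOn G (insert x U) := by
  have h2 : ConnOn G {x} := by
    rw [ConnOn, induce_singleton_eq_top]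
    have : Nonempty ({x} : Set W) := ⟨⟨x, rfl⟩⟩
    exact connected_top
  have := connected_induce_union h2.preconnected h.preconnected (Set.mem_singleton x) hu ha
  rwa [Set.singleton_union] at this

lemma exists_cross {G : SimpleGraph W} (hc : G.Connected) {T : Set W} (hT : T.Nonempty)
    (hT' : Tᶜ.Nonempty) : ∃ p q, p ∈ T ∧ q ∉ T ∧ G.Adj p q := by
  obtain ⟨t, ht⟩ := hT
  obtain ⟨x, hx⟩ := hT'
  obtain ⟨p⟩ := hc.preconnected t x
  clear hc
  induction p with
  | nil => exact absurd ht hx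
  | @cons u v w h q ih =>
    by_cases hm : v ∈ T
    · exact ih hm hx
    · exact ⟨u, v, ht, hm, h⟩

lemma exists_adj {G : SimpleGraph W} (hc : G.Connected) [Nontrivial W] (v : W) :
    ∃ y, G.Adj v y := by
  obtain ⟨y, hy⟩ := exists_ne v
  obtain ⟨p⟩ := hc.preconnected v y
  cases p with
  | nil => exact absurd rfl hy
  | cons h _ => exact ⟨_, h⟩

lemma exists_noncut [Finite W] (G : SimpleGraph W) (hc : G.Connected)
    (h2 : 2 ≤ Nat.card W) : ∃ v : W, ConnOn G ({v}ᶜ : Set W) := by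
  classical
  have : Fintype W := Fintype.ofFinite W
  have : Nontrivial W := Fintype.one_lt_card_iff_nontrivial.mp
    (by rw [← Nat.card_eq_fintype_card]; omega)
  obtain ⟨r⟩ := hc.nonempty
  obtain ⟨v, -, hv⟩ := Finset.exists_max_image Finset.univ (fun x => G.dist r x)
    ⟨r, Finset.mem_univ r⟩
  have hvr : v ≠ r := by
    obtain ⟨y, hy⟩ := exists_ne r
    have h1 : 0 < G.dist r y := hc.pos_dist_of_ne (Ne.symm hy)
    have h2 := hv y (Finset.mem_univ y)
    intro heq
    rw [heq, SimpleGraph.dist_self] at h2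
    omega
  refine ⟨v, connOn_of_root r (Set.mem_compl_singleton_iff.mpr (Ne.symm hvr)) ?_⟩
  intro x hx
  have hxv : x ≠ v := hx
  obtain ⟨p, hp⟩ := (hc.preconnected x r).exists_walk_length_eq_dist
  refine ⟨p, ?_⟩
  intro z hz
  simp only [Set.mem_compl_iff, Set.mem_singleton_iff]
  rintro rfl
  have hlen : (p.takeUntil z hz).length + (p.dropUntil z hz).length = p.length := by
    conv_rhs => rw [← p.take_spec hz]
    rw [Walk.length_append]
  have h1 : G.dist x z ≤ (p.takeUntil z hz).length := SimpleGraph.dist_le _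
  have h2 : G.dist z r ≤ (p.dropUntil z hz).length := SimpleGraph.dist_le _
  have h3 : 0 < G.dist x z := hc.pos_dist_of_ne hxv
  have h4 := hv x (Finset.mem_univ x)
  have hc1 : G.dist r x = G.dist x r := SimpleGraph.dist_comm
  have hc2 : G.dist r z = G.dist z r := SimpleGraph.dist_comm
  omega

lemma connOn_induce_iff (G : SimpleGraph W) (U : Set W) (U' : Set U) :
    ConnOn (G.induce U) U' ↔ ConnOn G (Subtype.val '' U') := by
  refine Iso.connected_iff ⟨Equiv.Set.image Subtype.val U' Subtype.val_injective, ?_⟩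
  intro a b
  rfl

lemma image_compl_subtype (U : Set W) (T : Set U) :
    Subtype.val '' (Tᶜ : Set U) = U \ (Subtype.val '' T) := by
  ext z
  constructor
  · rintro ⟨a, haT, rfl⟩
    refine ⟨a.2, ?_⟩
    rintro ⟨b, hbT, hba⟩
    exact haT (Subtype.val_injective hba ▸ hbT)
  · rintro ⟨hzU, hz⟩
    exact ⟨⟨z, hzU⟩, fun hT => hz ⟨⟨z, hzU⟩, hT, rfl⟩, rfl⟩

end Part3

section Part4

open SimpleGraph Set

universe u

variable {W : Type*}

lemma card_compl_singleton [Finite W] (v : W) :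
    Nat.card ({v}ᶜ : Set W) = Nat.card W - 1 := by
  rw [Nat.card_coe_set_eq]
  have h := Set.ncard_add_ncard_compl ({v} : Set W)
  rw [Set.ncard_singleton] at h
  omega

lemma card_compl_pair [Finite W] {a b : W} (hab : a ≠ b) :
    Nat.card ({a, b}ᶜ : Set W) = Nat.card W - 2 := by
  rw [Nat.card_coe_set_eq]
  have h := Set.ncard_add_ncard_compl ({a, b} : Set W)
  rw [Set.ncard_pair hab] at h
  omega

lemma diff_singleton_eq_compl_pair (v w : W) :
    ({v}ᶜ : Set W) \ {w} = ({v, w}ᶜ : Set W) := by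
  ext z; simp [not_or]

lemma diff_pair_eq_compl_triple (v a b : W) :
    ({v}ᶜ : Set W) \ {a, b} = ({v, a, b}ᶜ : Set W) := by
  ext z; simp [not_or]

lemma insert_compl_pair {v w : W} (h : v ≠ w) :
    insert v ({v, w}ᶜ : Set W) = ({w}ᶜ : Set W) := by
  ext z; by_cases hz : z = v <;> simp [hz, h, not_or]

lemma insert_compl_triple {v a b : W} (ha : v ≠ a) (hb : v ≠ b) :
    insert v ({v, a, b}ᶜ : Set W) = ({a, b}ᶜ : Set W) := by
  ext z; by_cases hz : z = v <;> simp [hz, ha, hb, not_or]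

lemma nbr_induce {G : SimpleGraph W} {v : W} (a : ({v}ᶜ : Set W))
    (hnadj : ¬ G.Adj ↑a v) :
    {y : ({v}ᶜ : Set W) | (G.induce ({v}ᶜ : Set W)).Adj a y}.ncard
      = {y : W | G.Adj ↑a y}.ncard := by
  rw [← Set.ncard_image_of_injective _ Subtype.val_injective]
  congr 1
  ext z
  simp only [Set.mem_image, Set.mem_setOf_eq]
  constructor
  · rintro ⟨y, hy, rfl⟩; exact hy
  · intro hz
    have hzv : z ∈ ({v}ᶜ : Set W) := by
      simp only [Set.mem_compl_iff, Set.mem_singleton_iff]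
      rintro rfl; exact hnadj hz
    exact ⟨⟨z, hzv⟩, hz, rfl⟩

theorem lemL : ∀ (n : ℕ) (W : Type u) [Finite W] (G : SimpleGraph W),
    Nat.card W = n → G.Connected → 2 ≤ n →
    (∃ v : W, Odd ({y | G.Adj v y}.ncard) ∧ ConnOn G ({v}ᶜ : Set W)) ∨
    (∃ a b : W, G.Adj a b ∧ ConnOn G ({a, b}ᶜ : Set W)) := by
  intro n
  induction n using Nat.strong_induction_on with
  | _ n IH =>
  intro W _ G hcard hconn h2
  haveI : Fintype W := Fintype.ofFinite W
  haveI : Nontrivial W := Fintype.one_lt_card_iff_nontrivial.mp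
    (by rw [← Nat.card_eq_fintype_card]; omega)
  obtain ⟨v, hvconn⟩ := exists_noncut G hconn (by omega)
  by_cases hodd : Odd ({y | G.Adj v y}.ncard)
  · exact Or.inl ⟨v, hodd, hvconn⟩
  have hDsub : {y | G.Adj v y} ⊆ ({v}ᶜ : Set W) := by
    intro y hy
    simp only [Set.mem_compl_iff, Set.mem_singleton_iff]
    exact (G.ne_of_adj hy).symm
  obtain ⟨y0, hy0⟩ := exists_adj hconn v
  have hDpos : 1 ≤ ({y | G.Adj v y}).ncard :=
    (Set.ncard_pos (Set.toFinite _)).mpr ⟨y0, hy0⟩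
  have hn3 : 3 ≤ n := by
    by_contra hn
    have hcompl : ({v}ᶜ : Set W).ncard = 1 := by
      have h := Set.ncard_add_ncard_compl ({v} : Set W)
      rw [Set.ncard_singleton] at h
      omega
    have hle : ({y | G.Adj v y}).ncard ≤ 1 :=
      hcompl ▸ Set.ncard_le_ncard hDsub (Set.toFinite _)
    have heq : ({y | G.Adj v y}).ncard = 1 := by omega
    exact hodd (by rw [heq]; exact odd_one)
  have hcardU : Nat.card ({v}ᶜ : Set W) = n - 1 := by
    rw [card_compl_singleton, hcard]
  have hIH := IH (n-1) (by omega) ({v}ᶜ : Set W) (G.induce ({v}ᶜ : Set W)) hcardU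
    hvconn (by omega)
  rcases hIH with ⟨w, hwodd, hwconn⟩ | ⟨a, b, hab, habconn⟩
  · -- Case (i): odd non-cut vertex w in H = G - v
    have hvw : (↑w : W) ≠ v := Set.mem_compl_singleton_iff.mp w.2
    have hGw : ConnOn G ({v, ↑w}ᶜ : Set W) := by
      rw [connOn_induce_iff, image_compl_subtype, Set.image_singleton,
        diff_singleton_eq_compl_pair] at hwconn
      exact hwconn
    by_cases hadj : G.Adj v ↑w
    · exact Or.inr ⟨v, ↑w, hadj, hGw⟩
    · refine Or.inl ⟨↑w, ?_, ?_⟩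
      · rw [← nbr_induce w (fun h => hadj h.symm)]
        exact hwodd
      · have hyv : y0 ≠ v := (G.ne_of_adj hy0).symm
        have hyw : y0 ≠ ↑w := by rintro rfl; exact hadj hy0
        have hins : ConnOn G (insert v ({v, ↑w}ᶜ : Set W)) :=
          connOn_insert hGw (by simp [hyv, hyw, not_or]) hy0
        rwa [insert_compl_pair hvw.symm] at hins
  · -- Case (ii): removable adjacent pair a b in H
    have hab' : G.Adj ↑a ↑b := hab
    have hva : v ≠ ↑a := (Set.mem_compl_singleton_iff.mp a.2).symm
    have hvb : v ≠ ↑b := (Set.mem_compl_singleton_iff.mp b.2).symm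
    have habne : a ≠ b := ne_of_adj _ hab
    have hGab : ConnOn G ({v, ↑a, ↑b}ᶜ : Set W) := by
      rw [connOn_induce_iff, image_compl_subtype, Set.image_pair,
        diff_pair_eq_compl_triple] at habconn
      exact habconn
    by_cases hout : ∃ y, G.Adj v y ∧ y ≠ ↑a ∧ y ≠ ↑b
    · obtain ⟨y, hy, hya, hyb⟩ := hout
      have hyv : y ≠ v := (G.ne_of_adj hy).symm
      have hins : ConnOn G (insert v ({v, ↑a, ↑b}ᶜ : Set W)) :=
        connOn_insert hGab (by simp [hyv, hya, hyb, not_or]) hy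
      rw [insert_compl_triple hva hvb] at hins
      exact Or.inr ⟨↑a, ↑b, hab', hins⟩
    · push_neg at hout
      have hvadjs : G.Adj v ↑a ∧ G.Adj v ↑b := by
        by_cases h1 : G.Adj v ↑a <;> by_cases h2 : G.Adj v ↑b
        · exact ⟨h1, h2⟩
        · exfalso; apply hodd
          have hDa : {y | G.Adj v y} = {(↑a : W)} := by
            apply Set.Subset.antisymm
            · intro y hy
              by_cases hya : y = ↑a
              · simp [hya]
              · exact absurd (hout y hy hya ▸ hy) h2
            · intro y hy
              rw [Set.mem_singleton_iff] at hy
              rw [hy]; exact h1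
          rw [hDa, Set.ncard_singleton]; exact odd_one
        · exfalso; apply hodd
          have hDb : {y | G.Adj v y} = {(↑b : W)} := by
            apply Set.Subset.antisymm
            · intro y hy
              by_cases hya : y = ↑a
              · exact absurd (hya ▸ hy) h1
              · simp [hout y hy hya]
            · intro y hy
              rw [Set.mem_singleton_iff] at hy
              rw [hy]; exact h2
          rw [hDb, Set.ncard_singleton]; exact odd_one
        · exfalso
          rcases eq_or_ne y0 ↑a with rfl | hya
          · exact h1 hy0
          · exact h2 ((hout y0 hy0 hya) ▸ hy0)
      obtain ⟨hvadja, hvadjb⟩ := hvadjs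
      have hTne : ({a, b} : Set ({v}ᶜ : Set W)).Nonempty := ⟨a, Or.inl rfl⟩
      have hTc : (({a, b} : Set ({v}ᶜ : Set W))ᶜ).Nonempty := by
        obtain ⟨z⟩ := habconn.nonempty
        exact ⟨↑z, z.2⟩
      obtain ⟨x, y, hxT, hyT, hxy⟩ := exists_cross hvconn hTne hTc
      rw [Set.mem_insert_iff, Set.mem_singleton_iff] at hxT
      rcases hxT with rfl | rfl
      · -- x = a has neighbor y outside {a,b}; remove (v, b)
        have h5 : ConnOn (G.induce ({v}ᶜ : Set W)) (insert x ({x, b}ᶜ)) :=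
          connOn_insert habconn hyT hxy
        rw [insert_compl_pair habne] at h5
        rw [connOn_induce_iff, image_compl_subtype, Set.image_singleton,
          diff_singleton_eq_compl_pair] at h5
        exact Or.inr ⟨v, ↑b, hvadjb, h5⟩
      · -- x = b has neighbor y outside {a,b}; remove (v, a)
        have h5 : ConnOn (G.induce ({v}ᶜ : Set W)) (insert x ({a, x}ᶜ)) := by
          apply connOn_insert habconn hyT hxy
        rw [Set.pair_comm a x, insert_compl_pair habne.symm] at h5
        rw [connOn_induce_iff, image_compl_subtype, Set.image_singleton,
          diff_singleton_eq_compl_pair] at h5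
        exact Or.inr ⟨v, ↑a, hvadja, h5⟩

end Part4

section Part5

open SimpleGraph Set

universe u

theorem mainM : ∀ (n : ℕ) (W : Type u) [Finite W] (G : SimpleGraph W)
    (sign : Sym2 W → Bool), Nat.card W = n → G.Connected →
    ∃ A : Set W, 2 * G.edgeSet.ncard + n ≤ 4 * balCount G sign A + 1 := by
  intro n
  induction n using Nat.strong_induction_on with
  | _ n IH =>
  intro W _ G sign hcard hconn
  haveI : Fintype W := Fintype.ofFinite W
  have hWne : Nonempty W := hconn.nonempty
  have hn1 : 1 ≤ n := by rw [← hcard]; exact Nat.card_pos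
  have hEfin : G.edgeSet.Finite := Set.toFinite _
  by_cases h2 : 2 ≤ n
  swap
  · -- n = 1
    haveI : Subsingleton W := by
      have h1 : Nat.card W = 1 := by omega
      exact (Nat.card_eq_one_iff_unique.mp h1).1
    have hE : G.edgeSet = ∅ := by
      rw [Set.eq_empty_iff_forall_notMem]
      intro e he
      revert he
      induction e with
      | _ x y =>
        intro he
        exact G.ne_of_adj (G.mem_edgeSet.mp he) (Subsingleton.elim x y)
    refine ⟨∅, ?_⟩
    rw [hE, Set.ncard_empty]
    omega
  · have hiffmk : ∀ (A B : Set W) (t : W), (∀ z, z ≠ t → (z ∈ A ↔ z ∈ B)) →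
        ∀ e : Sym2 W, t ∉ e → (SignConsistent sign A e ↔ SignConsistent sign B e) := by
      intro A B t hch e ht
      exact sc_congr sign (fun x hx => hch x (fun hxt => ht (hxt ▸ hx)))
    rcases lemL n W G hcard hconn h2 with ⟨v, hodd, hvconn⟩ | ⟨a, b, hab, habconn⟩
    · -- Case (i): remove odd-degree non-cut vertex v
      have hcardU : Nat.card ({v}ᶜ : Set W) = n - 1 := by
        rw [card_compl_singleton, hcard]
      obtain ⟨A', hA'⟩ := IH (n-1) (by omega) ({v}ᶜ : Set W)
        (G.induce ({v}ᶜ : Set W)) (fun e => sign (Sym2.map Subtype.val e)) hcardU hvconn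
      rw [balCount_induce, edgeSet_induce_ncard] at hA'
      obtain ⟨A₂, hch, hcnt, hcntodd⟩ := greedy sign (Subtype.val '' A') v
        {e | e ∈ G.edgeSet ∧ v ∈ e} (hEfin.subset fun e h => h.1)
        (fun e he => ⟨he.2, G.not_isDiag_of_mem_edgeSet he.1⟩)
      refine ⟨A₂, ?_⟩
      have hiff := hiffmk A₂ (Subtype.val '' A') v hch
      have hsplitE := ncard_split G.edgeSet hEfin (fun e => v ∈ e)
      have hsplitC := ncard_split {e | e ∈ G.edgeSet ∧ SignConsistent sign A₂ e}
        (hEfin.subset fun e h => h.1) (fun e => v ∈ e)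
      have heq1 : {e | e ∈ G.edgeSet ∧ ¬ v ∈ e}
          = {e | e ∈ G.edgeSet ∧ ∀ x ∈ e, x ∈ ({v}ᶜ : Set W)} := by
        ext e
        simp only [Set.mem_setOf_eq, Set.mem_compl_iff, Set.mem_singleton_iff]
        constructor
        · rintro ⟨he, hv⟩; exact ⟨he, fun x hx hxv => hv (hxv ▸ hx)⟩
        · rintro ⟨he, hall⟩; exact ⟨he, fun hv => hall v hv rfl⟩
      have heq2 : {e | e ∈ {e | e ∈ G.edgeSet ∧ SignConsistent sign A₂ e} ∧ ¬ v ∈ e}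
          = {e | (e ∈ G.edgeSet ∧ ∀ x ∈ e, x ∈ ({v}ᶜ : Set W)) ∧
              SignConsistent sign (Subtype.val '' A') e} := by
        ext e
        simp only [Set.mem_setOf_eq, Set.mem_compl_iff, Set.mem_singleton_iff]
        constructor
        · rintro ⟨⟨he, hsc⟩, hv⟩
          exact ⟨⟨he, fun x hx hxv => hv (hxv ▸ hx)⟩, (hiff e hv).mp hsc⟩
        · rintro ⟨⟨he, hall⟩, hsc⟩
          have hv : v ∉ e := fun hv => hall v hv rfl
          exact ⟨⟨he, (hiff e hv).mpr hsc⟩, hv⟩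
      have heq3 : {e | e ∈ {e | e ∈ G.edgeSet ∧ SignConsistent sign A₂ e} ∧ v ∈ e}
          = {e | e ∈ {e | e ∈ G.edgeSet ∧ v ∈ e} ∧ SignConsistent sign A₂ e} := by
        ext e; simp only [Set.mem_setOf_eq]; tauto
      have hoddf : Odd ({e | e ∈ G.edgeSet ∧ v ∈ e}.ncard) := by
        rw [ncard_edges_at]; exact hodd
      have hgain := hcntodd hoddf
      unfold balCount
      rw [hsplitC, heq3, heq2, hsplitE, heq1]
      omega
    · -- Case (ii): remove adjacent pair
      have key : ∀ x₁ x₂ : W, G.Adj x₁ x₂ → ConnOn G ({x₁, x₂}ᶜ : Set W) →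
          (Odd ({e | e ∈ G.edgeSet ∧ x₁ ∈ e ∧ x₂ ∉ e}.ncard) ∨
            Odd ({e | e ∈ G.edgeSet ∧ x₂ ∈ e}.ncard)) →
          ∃ A : Set W, 2 * G.edgeSet.ncard + n ≤ 4 * balCount G sign A + 1 := by
        intro x₁ x₂ hadj hcon hpar
        have hne : x₁ ≠ x₂ := G.ne_of_adj hadj
        have hcardU : Nat.card ({x₁, x₂}ᶜ : Set W) = n - 2 := by
          rw [card_compl_pair hne, hcard]
        obtain ⟨A', hA'⟩ := IH (n-2) (by omega) ({x₁, x₂}ᶜ : Set W)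
          (G.induce ({x₁, x₂}ᶜ : Set W)) (fun e => sign (Sym2.map Subtype.val e)) hcardU hcon
        rw [balCount_induce, edgeSet_induce_ncard] at hA'
        obtain ⟨A₁, hch1, hcnt1, hcnt1o⟩ := greedy sign (Subtype.val '' A') x₁
          {e | e ∈ G.edgeSet ∧ x₁ ∈ e ∧ x₂ ∉ e} (hEfin.subset fun e h => h.1)
          (fun e he => ⟨he.2.1, G.not_isDiag_of_mem_edgeSet he.1⟩)
        obtain ⟨A₂, hch2, hcnt2, hcnt2o⟩ := greedy sign A₁ x₂
          {e | e ∈ G.edgeSet ∧ x₂ ∈ e} (hEfin.subset fun e h => h.1)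
          (fun e he => ⟨he.2, G.not_isDiag_of_mem_edgeSet he.1⟩)
        refine ⟨A₂, ?_⟩
        have hiff2 := hiffmk A₂ A₁ x₂ hch2
        have hiff1 : ∀ e : Sym2 W, x₁ ∉ e → x₂ ∉ e →
            (SignConsistent sign A₂ e ↔ SignConsistent sign (Subtype.val '' A') e) := by
          intro e h1 h2'
          rw [hiff2 e h2']
          exact hiffmk A₁ (Subtype.val '' A') x₁ hch1 e h1
        have hsE1 := ncard_split G.edgeSet hEfin (fun e => x₂ ∈ e)
        have hsE2 := ncard_split {e | e ∈ G.edgeSet ∧ ¬ x₂ ∈ e}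
          (hEfin.subset fun e h => h.1) (fun e => x₁ ∈ e)
        have hsC1 := ncard_split {e | e ∈ G.edgeSet ∧ SignConsistent sign A₂ e}
          (hEfin.subset fun e h => h.1) (fun e => x₂ ∈ e)
        have hsC2 := ncard_split
          {e | e ∈ {e | e ∈ G.edgeSet ∧ SignConsistent sign A₂ e} ∧ ¬ x₂ ∈ e}
          (hEfin.subset fun e h => h.1.1) (fun e => x₁ ∈ e)
        have heqA : {e | e ∈ {e | e ∈ G.edgeSet ∧ ¬ x₂ ∈ e} ∧ x₁ ∈ e}
            = {e | e ∈ G.edgeSet ∧ x₁ ∈ e ∧ x₂ ∉ e} := by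
          ext e; simp only [Set.mem_setOf_eq]; tauto
        have heqB : {e | e ∈ {e | e ∈ G.edgeSet ∧ ¬ x₂ ∈ e} ∧ ¬ x₁ ∈ e}
            = {e | e ∈ G.edgeSet ∧ ∀ x ∈ e, x ∈ ({x₁, x₂}ᶜ : Set W)} := by
          ext e
          simp only [Set.mem_setOf_eq, Set.mem_compl_iff, Set.mem_insert_iff,
            Set.mem_singleton_iff, not_or]
          constructor
          · rintro ⟨⟨he, h2'⟩, h1⟩
            exact ⟨he, fun x hx => ⟨fun hx1 => h1 (hx1 ▸ hx), fun hx2 => h2' (hx2 ▸ hx)⟩⟩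
          · rintro ⟨he, hall⟩
            exact ⟨⟨he, fun hx2 => (hall x₂ hx2).2 rfl⟩, fun hx1 => (hall x₁ hx1).1 rfl⟩
        have heqC : {e | e ∈ {e | e ∈ G.edgeSet ∧ SignConsistent sign A₂ e} ∧ x₂ ∈ e}
            = {e | e ∈ {e | e ∈ G.edgeSet ∧ x₂ ∈ e} ∧ SignConsistent sign A₂ e} := by
          ext e; simp only [Set.mem_setOf_eq]; tauto
        have heqD : {e | e ∈ {e | e ∈ {e | e ∈ G.edgeSet ∧ SignConsistent sign A₂ e} ∧
              ¬ x₂ ∈ e} ∧ x₁ ∈ e}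
            = {e | e ∈ {e | e ∈ G.edgeSet ∧ x₁ ∈ e ∧ x₂ ∉ e} ∧
                SignConsistent sign A₁ e} := by
          ext e
          simp only [Set.mem_setOf_eq]
          constructor
          · rintro ⟨⟨⟨he, hsc⟩, h2'⟩, h1⟩
            exact ⟨⟨he, h1, h2'⟩, (hiff2 e h2').mp hsc⟩
          · rintro ⟨⟨he, h1, h2'⟩, hsc⟩
            exact ⟨⟨⟨he, (hiff2 e h2').mpr hsc⟩, h2'⟩, h1⟩
        have heqE : {e | e ∈ {e | e ∈ {e | e ∈ G.edgeSet ∧ SignConsistent sign A₂ e} ∧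
              ¬ x₂ ∈ e} ∧ ¬ x₁ ∈ e}
            = {e | (e ∈ G.edgeSet ∧ ∀ x ∈ e, x ∈ ({x₁, x₂}ᶜ : Set W)) ∧
                SignConsistent sign (Subtype.val '' A') e} := by
          ext e
          simp only [Set.mem_setOf_eq, Set.mem_compl_iff, Set.mem_insert_iff,
            Set.mem_singleton_iff, not_or]
          constructor
          · rintro ⟨⟨⟨he, hsc⟩, h2'⟩, h1⟩
            exact ⟨⟨he, fun x hx => ⟨fun hx1 => h1 (hx1 ▸ hx), fun hx2 => h2' (hx2 ▸ hx)⟩⟩,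
              (hiff1 e h1 h2').mp hsc⟩
          · rintro ⟨⟨he, hall⟩, hsc⟩
            have h1 : x₁ ∉ e := fun hx1 => (hall x₁ hx1).1 rfl
            have h2' : x₂ ∉ e := fun hx2 => (hall x₂ hx2).2 rfl
            exact ⟨⟨⟨he, (hiff1 e h1 h2').mpr hsc⟩, h2'⟩, h1⟩
        have hgains : {e | e ∈ G.edgeSet ∧ x₁ ∈ e ∧ x₂ ∉ e}.ncard +
              {e | e ∈ G.edgeSet ∧ x₂ ∈ e}.ncard + 1 ≤
            2 * {e | e ∈ {e | e ∈ G.edgeSet ∧ x₁ ∈ e ∧ x₂ ∉ e} ∧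
                SignConsistent sign A₁ e}.ncard +
            2 * {e | e ∈ {e | e ∈ G.edgeSet ∧ x₂ ∈ e} ∧
                SignConsistent sign A₂ e}.ncard := by
          rcases hpar with h | h
          · have := hcnt1o h; omega
          · have := hcnt2o h; omega
        unfold balCount
        rw [hsC1, hsC2, heqC, heqD, heqE, hsE1, hsE2, heqA, heqB]
        omega
      by_cases hp : Odd ({e | e ∈ G.edgeSet ∧ a ∈ e ∧ b ∉ e}.ncard) ∨
          Odd ({e | e ∈ G.edgeSet ∧ b ∈ e}.ncard)
      · exact key a b hab habconn hp
      · push_neg at hp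
        apply key b a hab.symm (by rwa [Set.pair_comm])
        right
        have hins : {e | e ∈ G.edgeSet ∧ a ∈ e}
            = insert s(a, b) {e | e ∈ G.edgeSet ∧ a ∈ e ∧ b ∉ e} := by
          ext e
          simp only [Set.mem_setOf_eq, Set.mem_insert_iff]
          constructor
          · rintro ⟨he, ha⟩
            by_cases hb : b ∈ e
            · exact Or.inl (mem_pair_eq (G.ne_of_adj hab) ha hb)
            · exact Or.inr ⟨he, ha, hb⟩
          · rintro (rfl | ⟨he, ha, -⟩)
            · exact ⟨G.mem_edgeSet.mpr hab, by simp⟩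
            · exact ⟨he, ha⟩
        rw [hins, Set.ncard_insert_of_notMem (fun hmem => hmem.2.2 (by simp))
          (hEfin.subset fun e h => h.1)]
        exact (Nat.not_odd_iff_even.mp hp.1).add_one
      done
end Part5
end PTaux

/-- Poljak–Turzík bound. A connected signed graph with `n` vertices and
`m` edges has a balanced subgraph with at least `m/2 + (n-1)/4` edges, i.e.
`β(G) ≥ pt(G) = m/2 + (n-1)/4`. -/
theorem stmt0 {V : Type*} [Fintype V] (G : SimpleGraph V) (sign : Sym2 V → Bool)
    (hconn : G.Connected) :
    pt G = (G.edgeSet.ncard : ℚ) / 2 + ((Fintype.card V : ℚ) - 1) / 4 ∧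
      (beta G sign : ℚ) ≥ pt G := by
  classical
  haveI : Finite V := Finite.of_fintype V
  have ht : Nat.card G.ConnectedComponent = 1 := by
    rw [Nat.card_eq_one_iff_unique]
    constructor
    · constructor
      intro c d
      obtain ⟨u, rfl⟩ := c.exists_rep
      obtain ⟨w, rfl⟩ := d.exists_rep
      exact Quot.sound (hconn.preconnected u w)
    · exact hconn.nonempty.map G.connectedComponentMk
  have hpt : pt G = (G.edgeSet.ncard : ℚ) / 2 + ((Fintype.card V : ℚ) - 1) / 4 := by
    unfold pt
    rw [ht, Nat.card_eq_fintype_card]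
    norm_num
  refine ⟨hpt, ?_⟩
  obtain ⟨A, hA⟩ := PTaux.mainM (Nat.card V) V G sign rfl hconn
  have hbdd : BddAbove {k | ∃ A : Set V, k = balCount G sign A} := by
    refine ⟨G.edgeSet.ncard, ?_⟩
    rintro k ⟨A', rfl⟩
    exact Set.ncard_le_ncard (fun e h => h.1) (Set.toFinite _)
  have hbeta : balCount G sign A ≤ beta G sign := le_csSup hbdd ⟨A, rfl⟩
  have h1 : (balCount G sign A : ℚ) ≤ (beta G sign : ℚ) := Nat.cast_le.mpr hbeta
  rw [Nat.card_eq_fintype_card] at hA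
  have h2 : 2 * (G.edgeSet.ncard : ℚ) + (Fintype.card V : ℚ) ≤
      4 * (balCount G sign A : ℚ) + 1 := by exact_mod_cast hA
  rw [hpt]
  linarith
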